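/- With the same normalization ∫ G(y)†G(y) dμ₀ = I and unit vector η ∈ ℋ, the reduced state vector χ(t,υ) = U(t)F_t(υ)†η satisfies the mean-square normalization ∫ ‖χ(t,υ)‖² dP₀(υ) = 1, where P₀ is the product of the Poisson law in time and the i.i.d. marks law μ₀. -/

import Mathlib

open MeasureTheory

section Aux

lemma aux_measurableSet_strictMono (n : ℕ) :
    MeasurableSet {x : Fin n → ℝ | StrictMono x} := by
  have h1 : {x : Fin n → ℝ | StrictMono x}
      = ⋂ i, ⋂ j, {x : Fin n → ℝ | i < j → x i < x j} := by
    ext x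
    simp only [Set.mem_setOf_eq, Set.mem_iInter]
    exact ⟨fun hm i j hij => hm hij, fun hm i j hij => hm i j hij⟩
  rw [h1]
  refine MeasurableSet.iInter fun i => MeasurableSet.iInter fun j => ?_
  by_cases hij : i < j
  · have : {x : Fin n → ℝ | i < j → x i < x j} = {x | x i < x j} := by
      ext x; simp [hij]
    rw [this]
    exact measurableSet_lt (measurable_pi_apply i) (measurable_pi_apply j)
  · have : {x : Fin n → ℝ | i < j → x i < x j} = Set.univ := by
      ext x; simp [hij]
    rw [this]; exact MeasurableSet.univ

lemma aux_measurableSet_simplex (n : ℕ) (t : ℝ) :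
    MeasurableSet {x : Fin n → ℝ | (∀ i, x i ∈ Set.Ico 0 t) ∧ StrictMono x} := by
  have h1 : {x : Fin n → ℝ | (∀ i, x i ∈ Set.Ico 0 t) ∧ StrictMono x}
      = (⋂ i, {x : Fin n → ℝ | x i ∈ Set.Ico 0 t}) ∩ {x : Fin n → ℝ | StrictMono x} := by
    ext x
    simp only [Set.mem_setOf_eq, Set.mem_inter_iff, Set.mem_iInter]
  rw [h1]
  exact (MeasurableSet.iInter fun i =>
    (measurable_pi_apply i) measurableSet_Ico).inter (aux_measurableSet_strictMono n)

lemma aux_snoc_simplex_iff {n : ℕ} {y : Fin n → ℝ} {s t : ℝ} :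
    ((∀ i, (Fin.snoc y s : Fin (n+1) → ℝ) i ∈ Set.Ico 0 t)
        ∧ StrictMono (Fin.snoc y s : Fin (n+1) → ℝ))
      ↔ (s ∈ Set.Ico 0 t ∧ ((∀ i, y i ∈ Set.Ico 0 s) ∧ StrictMono y)) := by
  constructor
  · rintro ⟨h1, h2⟩
    have hs := h1 (Fin.last n)
    rw [Fin.snoc_last] at hs
    refine ⟨hs, fun i => ?_, fun i j hij => ?_⟩
    · have h0 := h1 i.castSucc
      rw [Fin.snoc_castSucc] at h0
      have hlt := h2 (Fin.castSucc_lt_last i)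
      rw [Fin.snoc_castSucc, Fin.snoc_last] at hlt
      exact ⟨h0.1, hlt⟩
    · have := h2 (show i.castSucc < j.castSucc from Fin.castSucc_lt_castSucc_iff.mpr hij)
      rwa [Fin.snoc_castSucc, Fin.snoc_castSucc] at this
  · rintro ⟨hs, hy, hm⟩
    constructor
    · intro i
      rcases Fin.eq_castSucc_or_eq_last i with ⟨i', rfl⟩ | rfl
      · rw [Fin.snoc_castSucc]
        exact ⟨(hy i').1, (hy i').2.trans hs.2⟩
      · rw [Fin.snoc_last]; exact hs
    · intro i j hij
      rcases Fin.eq_castSucc_or_eq_last j with ⟨j', rfl⟩ | rfl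
      · rcases Fin.eq_castSucc_or_eq_last i with ⟨i', rfl⟩ | rfl
        · rw [Fin.snoc_castSucc, Fin.snoc_castSucc]
          exact hm (Fin.castSucc_lt_castSucc_iff.mp hij)
        · exact absurd (hij.trans (Fin.castSucc_lt_last j')) (lt_irrefl _)
      · rcases Fin.eq_castSucc_or_eq_last i with ⟨i', rfl⟩ | rfl
        · rw [Fin.snoc_castSucc, Fin.snoc_last]
          exact (hy i').2
        · exact absurd hij (lt_irrefl _)

lemma aux_volume_simplex : ∀ (n : ℕ) (t : ℝ), 0 ≤ t →
    (volume : Measure (Fin n → ℝ))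
        {x : Fin n → ℝ | (∀ i, x i ∈ Set.Ico 0 t) ∧ StrictMono x}
      = ENNReal.ofReal (t ^ n / n.factorial) := by
  intro n
  induction n with
  | zero =>
    intro t ht
    have h1 : {x : Fin 0 → ℝ | (∀ i, x i ∈ Set.Ico 0 t) ∧ StrictMono x} = Set.univ :=
      Set.eq_univ_of_forall fun x => ⟨fun i => i.elim0, fun a b _ => a.elim0⟩
    rw [h1, volume_pi, Measure.pi_univ]
    simp
  | succ n ih =>
    intro t ht
    set e := MeasurableEquiv.piFinSuccAbove (fun _ : Fin (n+1) => ℝ) (Fin.last n) with he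
    have mp := (measurePreserving_piFinSuccAbove
        (fun _ : Fin (n+1) => (volume : Measure ℝ)) (Fin.last n)).symm e
    have hvol : (volume : Measure (Fin (n+1) → ℝ))
          {x : Fin (n+1) → ℝ | (∀ i, x i ∈ Set.Ico 0 t) ∧ StrictMono x}
        = ((volume : Measure ℝ).prod (Measure.pi fun _ : Fin n => (volume : Measure ℝ)))
            (e.symm ⁻¹' {x : Fin (n+1) → ℝ | (∀ i, x i ∈ Set.Ico 0 t) ∧ StrictMono x}) := by
      rw [mp.measure_preimage (aux_measurableSet_simplex (n+1) t).nullMeasurableSet]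
      rw [volume_pi]
    have hpre : e.symm ⁻¹' {x : Fin (n+1) → ℝ | (∀ i, x i ∈ Set.Ico 0 t) ∧ StrictMono x}
        = {p : ℝ × (Fin n → ℝ) | p.1 ∈ Set.Ico 0 t ∧
            ((∀ i, p.2 i ∈ Set.Ico 0 p.1) ∧ StrictMono p.2)} := by
      ext ⟨s, y⟩
      have : e.symm (s, y) = Fin.snoc y s := by
        simp only [he, MeasurableEquiv.piFinSuccAbove, MeasurableEquiv.symm_mk,
          MeasurableEquiv.coe_mk, Equiv.symm_symm, Fin.insertNthEquiv_apply]
        exact Fin.insertNth_last' s y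
      simp only [Set.mem_preimage, Set.mem_setOf_eq, this]
      exact aux_snoc_simplex_iff
    have hT : MeasurableSet {p : ℝ × (Fin n → ℝ) | p.1 ∈ Set.Ico 0 t ∧
        ((∀ i, p.2 i ∈ Set.Ico 0 p.1) ∧ StrictMono p.2)} := by
      refine (measurable_fst measurableSet_Ico).inter (MeasurableSet.inter ?_ ?_)
      · show MeasurableSet {p : ℝ × (Fin n → ℝ) | ∀ i, p.2 i ∈ Set.Ico 0 p.1}
        have : {p : ℝ × (Fin n → ℝ) | ∀ i, p.2 i ∈ Set.Ico 0 p.1}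
            = ⋂ i, ({p : ℝ × (Fin n → ℝ) | 0 ≤ p.2 i} ∩ {p | p.2 i < p.1}) := by
          ext p
          simp only [Set.mem_setOf_eq, Set.mem_iInter, Set.mem_inter_iff, Set.mem_Ico]
        rw [this]
        exact MeasurableSet.iInter fun i =>
          (measurableSet_le measurable_const (measurable_snd.eval)).inter
            (measurableSet_lt (measurable_snd.eval) measurable_fst)
      · exact measurable_snd (aux_measurableSet_strictMono n)
    rw [hvol, hpre, Measure.prod_apply hT]
    have hslice : (fun s : ℝ => (Measure.pi fun _ : Fin n => (volume : Measure ℝ))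
          (Prod.mk s ⁻¹' {p : ℝ × (Fin n → ℝ) | p.1 ∈ Set.Ico 0 t ∧
            ((∀ i, p.2 i ∈ Set.Ico 0 p.1) ∧ StrictMono p.2)}))
        = (Set.Ico (0:ℝ) t).indicator (fun s => ENNReal.ofReal (s ^ n / n.factorial)) := by
      funext s
      by_cases hst : s ∈ Set.Ico (0:ℝ) t
      · rw [Set.indicator_of_mem hst]
        have hpre2 : Prod.mk s ⁻¹' {p : ℝ × (Fin n → ℝ) | p.1 ∈ Set.Ico 0 t ∧
              ((∀ i, p.2 i ∈ Set.Ico 0 p.1) ∧ StrictMono p.2)}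
            = {y : Fin n → ℝ | (∀ i, y i ∈ Set.Ico 0 s) ∧ StrictMono y} := by
          ext y
          exact ⟨fun h => h.2, fun h => ⟨hst, h⟩⟩
        rw [hpre2, ← volume_pi]
        exact ih s hst.1
      · rw [Set.indicator_of_notMem hst]
        have hpre2 : Prod.mk s ⁻¹' {p : ℝ × (Fin n → ℝ) | p.1 ∈ Set.Ico 0 t ∧
              ((∀ i, p.2 i ∈ Set.Ico 0 p.1) ∧ StrictMono p.2)} = ∅ := by
          ext y
          simp only [Set.mem_preimage, Set.mem_setOf_eq, Set.mem_empty_iff_false, iff_false]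
          rintro ⟨h, -⟩
          exact hst h
        rw [hpre2, measure_empty]
    rw [hslice, lintegral_indicator measurableSet_Ico]
    have hint : IntegrableOn (fun s : ℝ => s ^ n / n.factorial) (Set.Ico 0 t) volume :=
      (((continuous_pow n).div_const _).integrableOn_Icc).mono_set Set.Ico_subset_Icc_self
    have hnn : 0 ≤ᵐ[volume.restrict (Set.Ico (0:ℝ) t)] fun s : ℝ => s ^ n / n.factorial := by
      refine (ae_restrict_iff' measurableSet_Ico).2 (ae_of_all _ fun s hs => ?_)
      have : (0:ℝ) ≤ s := hs.1
      positivity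
    rw [← ofReal_integral_eq_lintegral_ofReal hint hnn]
    have hval : ∫ s in Set.Ico (0:ℝ) t, s ^ n / n.factorial
        = t ^ (n+1) / (n+1).factorial := by
      rw [MeasureTheory.restrict_Ico_eq_restrict_Ioc,
        ← intervalIntegral.integral_of_le ht, intervalIntegral.integral_div,
        integral_pow]
      rw [Nat.factorial_succ]
      push_cast
      have hn : ((n:ℝ) + 1) ≠ 0 := by positivity
      have hf : ((n.factorial :ℝ)) ≠ 0 := by
        exact_mod_cast Nat.cast_ne_zero.mpr n.factorial_ne_zero
      field_simp
      simp
    rw [hval]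

end Aux

section Inner

variable {H Λ : Type*} [NormedAddCommGroup H] [InnerProductSpace ℂ H]
    [MeasurableSpace Λ] [MeasurableSpace H] [BorelSpace H]

lemma aux_fold_measurable
    (U : ℝ → (H ≃ₗᵢ[ℂ] H)) (G : Λ → (H →L[ℂ] H))
    (hmeas : Measurable fun p : Λ × H => G p.1 p.2)
    (Gc : ℝ → Λ → H → H)
    (hGc : ∀ r y v, Gc r y v = (U r).symm (G y (U r v))) :
    ∀ (n : ℕ) (x : Fin n → ℝ),
      Measurable (fun p : (Fin n → Λ) × H =>
        (List.ofFn fun j => ((x j, p.1 j) : ℝ × Λ)).foldl (fun v q => Gc q.1 q.2 v) p.2) := by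
  have hGcm : ∀ r : ℝ, Measurable fun p : Λ × H => Gc r p.1 p.2 := by
    intro r
    have : (fun p : Λ × H => Gc r p.1 p.2)
        = fun p : Λ × H => (U r).symm (G p.1 (U r p.2)) := by
      funext p; rw [hGc]
    rw [this]
    exact ((U r).symm.continuous.measurable).comp
      (hmeas.comp (measurable_fst.prodMk ((U r).continuous.measurable.comp measurable_snd)))
  intro n
  induction n with
  | zero =>
    intro x
    simpa using measurable_snd
  | succ n ih =>
    intro x
    have hrw : (fun p : (Fin (n+1) → Λ) × H =>
          (List.ofFn fun j => ((x j, p.1 j) : ℝ × Λ)).foldl (fun v q => Gc q.1 q.2 v) p.2)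
        = (fun q : (Fin n → Λ) × H =>
            (List.ofFn fun j => ((x j.succ, q.1 j) : ℝ × Λ)).foldl
              (fun v q => Gc q.1 q.2 v) q.2)
          ∘ (fun p : (Fin (n+1) → Λ) × H =>
              ((fun j => p.1 j.succ), Gc (x 0) (p.1 0) p.2)) := by
      funext p
      simp [List.ofFn_succ]
    rw [hrw]
    refine (ih _).comp (Measurable.prodMk ?_ ?_)
    · exact measurable_pi_lambda _ fun j => (measurable_pi_apply j.succ).comp measurable_fst
    · have h5 : Measurable fun p : (Fin (n+1) → Λ) × H => ((p.1 0 : Λ), p.2) :=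
        (measurable_fst.eval).prodMk measurable_snd
      exact (hGcm (x 0)).comp h5

lemma aux_fold_lintegral
    (μ₀ : Measure Λ) [IsProbabilityMeasure μ₀]
    (U : ℝ → (H ≃ₗᵢ[ℂ] H)) (G : Λ → (H →L[ℂ] H))
    (hmeas : Measurable fun p : Λ × H => G p.1 p.2)
    (hnorm : ∀ ψ : H, ∫⁻ y, (‖G y ψ‖₊ : ENNReal) ^ 2 ∂μ₀ = (‖ψ‖₊ : ENNReal) ^ 2)
    (Gc : ℝ → Λ → H → H)
    (hGc : ∀ r y v, Gc r y v = (U r).symm (G y (U r v))) :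
    ∀ (n : ℕ) (x : Fin n → ℝ) (ψ : H),
      ∫⁻ y : Fin n → Λ,
          (‖(List.ofFn fun j => ((x j, y j) : ℝ × Λ)).foldl
              (fun v q => Gc q.1 q.2 v) ψ‖₊ : ENNReal) ^ 2
        ∂(Measure.pi fun _ => μ₀) = (‖ψ‖₊ : ENNReal) ^ 2 := by
  intro n
  induction n with
  | zero =>
    intro x ψ
    simp
  | succ n ih =>
    intro x ψ
    set e := MeasurableEquiv.piFinSuccAbove (fun _ : Fin (n+1) => Λ) 0 with he
    have mp := (measurePreserving_piFinSuccAbove (fun _ : Fin (n+1) => μ₀) 0).symm e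
    have hF : Measurable fun y : Fin (n+1) → Λ =>
        (‖(List.ofFn fun j => ((x j, y j) : ℝ × Λ)).foldl
            (fun v q => Gc q.1 q.2 v) ψ‖₊ : ENNReal) ^ 2 := by
      have := (aux_fold_measurable U G hmeas Gc hGc (n+1) x).comp
        ((measurable_id.prodMk measurable_const) :
          Measurable fun y : Fin (n+1) → Λ => (y, ψ))
      exact ((measurable_nnnorm.comp this).coe_nnreal_ennreal).pow_const 2
    rw [← mp.lintegral_comp hF]
    have hval : ∀ p : Λ × (Fin n → Λ),
        (‖(List.ofFn fun j => ((x j, e.symm p j) : ℝ × Λ)).foldl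
            (fun v q => Gc q.1 q.2 v) ψ‖₊ : ENNReal) ^ 2
        = (‖(List.ofFn fun j : Fin n => ((x j.succ, p.2 j) : ℝ × Λ)).foldl
            (fun v q => Gc q.1 q.2 v) (Gc (x 0) p.1 ψ)‖₊ : ENNReal) ^ 2 := by
      rintro ⟨a, y⟩
      have h0 : e.symm (a, y) = Fin.cons a y := by
        simp only [he, MeasurableEquiv.piFinSuccAbove, MeasurableEquiv.symm_mk,
          MeasurableEquiv.coe_mk, Equiv.symm_symm, Fin.insertNthEquiv_apply]
        exact Fin.insertNth_zero' a y
      have h1 : (e.symm (a, y)) 0 = a := by rw [h0]; simp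
      have h2 : ∀ j : Fin n, (e.symm (a, y)) j.succ = y j := by
        intro j
        rw [h0]
        simp
      simp only [List.ofFn_succ, List.foldl_cons, h1, h2]
    simp only [hval]
    rw [lintegral_prod]
    · have hinner : ∀ a : Λ,
          ∫⁻ y : Fin n → Λ,
            (‖(List.ofFn fun j : Fin n => ((x j.succ, y j) : ℝ × Λ)).foldl
                (fun v q => Gc q.1 q.2 v) (Gc (x 0) a ψ)‖₊ : ENNReal) ^ 2
            ∂(Measure.pi fun _ => μ₀) = (‖Gc (x 0) a ψ‖₊ : ENNReal) ^ 2 :=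
        fun a => ih _ _
      simp only [hinner]
      have hGcn : ∀ a : Λ, (‖Gc (x 0) a ψ‖₊ : ENNReal) = (‖G a (U (x 0) ψ)‖₊ : ENNReal) := by
        intro a
        rw [hGc]
        congr 1
        simp [nnnorm]
      simp only [hGcn]
      rw [hnorm (U (x 0) ψ)]
      congr 1
      simp [nnnorm]
    · have hm : Measurable fun p : Λ × (Fin n → Λ) =>
          (‖(List.ofFn fun j : Fin n => ((x j.succ, p.2 j) : ℝ × Λ)).foldl
              (fun v q => Gc q.1 q.2 v) (Gc (x 0) p.1 ψ)‖₊ : ENNReal) ^ 2 := by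
        have hcomp : Measurable fun p : Λ × (Fin n → Λ) =>
            ((p.2 : Fin n → Λ), Gc (x 0) p.1 ψ) := by
          refine measurable_snd.prodMk ?_
          have : (fun p : Λ × (Fin n → Λ) => Gc (x 0) p.1 ψ)
              = (fun q : Λ × H => Gc (x 0) q.1 q.2) ∘ (fun p => (p.1, ψ)) := rfl
          rw [this]
          have hGcm : Measurable fun q : Λ × H => Gc (x 0) q.1 q.2 := by
            have h4 : (fun q : Λ × H => Gc (x 0) q.1 q.2)
                = fun q : Λ × H => (U (x 0)).symm (G q.1 (U (x 0) q.2)) := by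
              funext q; rw [hGc]
            rw [h4]
            exact ((U (x 0)).symm.continuous.measurable).comp
              (hmeas.comp (measurable_fst.prodMk
                ((U (x 0)).continuous.measurable.comp measurable_snd)))
          exact hGcm.comp (measurable_fst.prodMk measurable_const)
        have := (aux_fold_measurable U G hmeas Gc hGc n (fun j => x j.succ)).comp hcomp
        exact ((measurable_nnnorm.comp this).coe_nnreal_ennreal).pow_const 2
      exact hm.aemeasurable

end Inner

/-- Mean-square normalization of the reduced state vector χ(t,υ) = U(t)F_t(υ)†η with
respect to P₀ = (Poisson law of intensity ν on [0,t)) ⊗ (i.i.d. marks law μ₀):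
Σ_n e^{−νt} νⁿ ∫_{0≤t₁<…<t_n<t} ∫_{Λⁿ} ‖G(t_n,y_n)⋯G(t₁,y₁)η‖² dμ₀ⁿ dt = 1,
for unit η, given the POVM normalization ∫‖G(y)ψ‖²dμ₀ = ‖ψ‖² and G(r,y) = U(r)†G(y)U(r). -/
theorem stmt14 {H Λ : Type*} [NormedAddCommGroup H] [InnerProductSpace ℂ H]
    [MeasurableSpace Λ] [MeasurableSpace H] [BorelSpace H]
    (μ₀ : Measure Λ) [IsProbabilityMeasure μ₀]
    (U : ℝ → (H ≃ₗᵢ[ℂ] H)) (G : Λ → (H →L[ℂ] H))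
    (hmeas : Measurable fun p : Λ × H => G p.1 p.2)
    (hnorm : ∀ ψ : H, ∫⁻ y, (‖G y ψ‖₊ : ENNReal) ^ 2 ∂μ₀ = (‖ψ‖₊ : ENNReal) ^ 2)
    (Gc : ℝ → Λ → H → H)
    (hGc : ∀ r y v, Gc r y v = (U r).symm (G y (U r v)))
    (ν tmax : ℝ) (hν : 0 < ν) (ht : 0 < tmax)
    (η : H) (hη : ‖η‖ = 1) :
    (∑' n : ℕ,
      ∫⁻ x in {x : Fin n → ℝ | (∀ i, x i ∈ Set.Ico 0 tmax) ∧ StrictMono x},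
        ∫⁻ y : Fin n → Λ,
          ENNReal.ofReal (Real.exp (-ν * tmax)) * ENNReal.ofReal ν ^ n *
            (‖(List.ofFn fun j => ((x j, y j) : ℝ × Λ)).foldl
                (fun v p => Gc p.1 p.2 v) η‖₊ : ENNReal) ^ 2
          ∂(Measure.pi fun _ => μ₀))
      = 1 := by
  have hterm : ∀ n : ℕ,
      (∫⁻ x in {x : Fin n → ℝ | (∀ i, x i ∈ Set.Ico 0 tmax) ∧ StrictMono x},
        ∫⁻ y : Fin n → Λ,
          ENNReal.ofReal (Real.exp (-ν * tmax)) * ENNReal.ofReal ν ^ n *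
            (‖(List.ofFn fun j => ((x j, y j) : ℝ × Λ)).foldl
                (fun v p => Gc p.1 p.2 v) η‖₊ : ENNReal) ^ 2
          ∂(Measure.pi fun _ => μ₀))
      = ENNReal.ofReal (Real.exp (-ν * tmax) * (ν ^ n * (tmax ^ n / n.factorial))) := by
    intro n
    have hηn : (‖η‖₊ : ENNReal) = 1 := by
      rw [show ‖η‖₊ = 1 from NNReal.coe_injective (by simpa using hη)]
      simp
    have hin : ∀ x : Fin n → ℝ,
        (∫⁻ y : Fin n → Λ,
          ENNReal.ofReal (Real.exp (-ν * tmax)) * ENNReal.ofReal ν ^ n *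
            (‖(List.ofFn fun j => ((x j, y j) : ℝ × Λ)).foldl
                (fun v p => Gc p.1 p.2 v) η‖₊ : ENNReal) ^ 2
          ∂(Measure.pi fun _ => μ₀))
        = ENNReal.ofReal (Real.exp (-ν * tmax)) * ENNReal.ofReal ν ^ n := by
      intro x
      have hFm : Measurable fun y : Fin n → Λ =>
          (‖(List.ofFn fun j => ((x j, y j) : ℝ × Λ)).foldl
              (fun v p => Gc p.1 p.2 v) η‖₊ : ENNReal) ^ 2 := by
        have := (aux_fold_measurable U G hmeas Gc hGc n x).comp
          ((measurable_id.prodMk measurable_const) :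
            Measurable fun y : Fin n → Λ => (y, η))
        exact ((measurable_nnnorm.comp this).coe_nnreal_ennreal).pow_const 2
      rw [lintegral_const_mul _ hFm,
        aux_fold_lintegral μ₀ U G hmeas hnorm Gc hGc n x η, hηn]
      simp
    calc
      (∫⁻ x in {x : Fin n → ℝ | (∀ i, x i ∈ Set.Ico 0 tmax) ∧ StrictMono x},
        ∫⁻ y : Fin n → Λ,
          ENNReal.ofReal (Real.exp (-ν * tmax)) * ENNReal.ofReal ν ^ n *
            (‖(List.ofFn fun j => ((x j, y j) : ℝ × Λ)).foldl
                (fun v p => Gc p.1 p.2 v) η‖₊ : ENNReal) ^ 2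
          ∂(Measure.pi fun _ => μ₀))
        = ∫⁻ _ in {x : Fin n → ℝ | (∀ i, x i ∈ Set.Ico 0 tmax) ∧ StrictMono x},
            ENNReal.ofReal (Real.exp (-ν * tmax)) * ENNReal.ofReal ν ^ n := by
          exact setLIntegral_congr_fun (aux_measurableSet_simplex n tmax)
            (fun x _ => hin x)
      _ = ENNReal.ofReal (Real.exp (-ν * tmax)) * ENNReal.ofReal ν ^ n *
            ENNReal.ofReal (tmax ^ n / n.factorial) := by
          rw [setLIntegral_const, aux_volume_simplex n tmax ht.le]
      _ = ENNReal.ofReal (Real.exp (-ν * tmax) * (ν ^ n * (tmax ^ n / n.factorial))) := by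
          rw [ENNReal.ofReal_mul (Real.exp_pos _).le, ENNReal.ofReal_mul (by positivity),
            ← ENNReal.ofReal_pow hν.le]
          ring
  simp only [hterm]
  have hsummand : ∀ n : ℕ, Real.exp (-ν * tmax) * (ν ^ n * (tmax ^ n / n.factorial))
      = Real.exp (-ν * tmax) * ((ν * tmax) ^ n / n.factorial) := by
    intro n; rw [mul_pow]; ring
  simp only [hsummand]
  rw [← ENNReal.ofReal_tsum_of_nonneg (fun n => by positivity)
      (((Real.summable_pow_div_factorial (ν * tmax)).mul_left _))]
  rw [tsum_mul_left]
  have hexp : ∑' n : ℕ, (ν * tmax) ^ n / n.factorial = Real.exp (ν * tmax) := by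
    rw [Real.exp_eq_exp_ℝ, NormedSpace.exp_eq_tsum_div]
  rw [hexp, ← Real.exp_add]
  simp
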